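/- For every sorted probability distribution p_1 ≥ ⋯ ≥ p_N ≥ 0 and every 0 ≤ p ≤ 1/2, the maximum cut weight of G_X is at most a quarter of the total weight: MAXCUT(G_X) ≤ (1/4)·(Σ_{i≠j} w_{i,j} + Σ_{i=1}^N (1−2p)·p_i). -/

import Mathlib

open Finset

noncomputable def guess (N : ℕ) (q : Fin N → ℝ) : ℝ :=
  Finset.univ.inf' ⟨1, Finset.mem_univ 1⟩
    (fun σ : Equiv.Perm (Fin N) => ∑ k : Fin N, ((k : ℝ) + 1) * q (σ k))

noncomputable def guessA (N : ℕ) (q : Fin N → ℝ) (p : ℝ) (A : Finset (Fin N)) : ℝ :=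
  ∑ y : Bool, Finset.univ.inf' ⟨1, Finset.mem_univ 1⟩
    (fun σ : Equiv.Perm (Fin N) => ∑ k : Fin N,
      ((k : ℝ) + 1) * q (σ k) * (if ((σ k ∈ A) ↔ (y = true)) then 1 - p else p))

noncomputable def guessOpt (N : ℕ) (q : Fin N → ℝ) (p : ℝ) : ℝ :=
  Finset.univ.inf' ⟨∅, Finset.mem_univ ∅⟩ (fun A : Finset (Fin N) => guessA N q p A)

def zigzag (N : ℕ) : Finset (Fin N) := Finset.univ.filter (fun k => (k : ℕ) % 2 = 0)

noncomputable def wt (N : ℕ) (q : Fin N → ℝ) (p : ℝ) (i j : Fin N) : ℝ :=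
  max 0 ((1 - p) * min (q i) (q j) - p * max (q i) (q j))

noncomputable def cut (N : ℕ) (q : Fin N → ℝ) (p : ℝ) (A : Finset (Fin N)) : ℝ :=
  ∑ i ∈ A, ∑ j ∈ Aᶜ, wt N q p i j

noncomputable def maxcut (N : ℕ) (q : Fin N → ℝ) (p : ℝ) : ℝ :=
  Finset.univ.sup' ⟨∅, Finset.mem_univ ∅⟩ (fun A : Finset (Fin N) => cut N q p A)

open MeasureTheory

lemma indicator_mul_indicator (s t : Set ℝ) (x : ℝ) :
    s.indicator (1 : ℝ → ℝ) x * t.indicator 1 x = (s ∩ t).indicator 1 x := by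
  by_cases h1 : x ∈ s <;> by_cases h2 : x ∈ t <;>
    simp [Set.indicator_apply, h1, h2, Set.mem_inter_iff]

lemma integrable_ind (a b : ℝ) : Integrable ((Set.Ioc a b).indicator (1 : ℝ → ℝ)) := by
  rw [integrable_indicator_iff measurableSet_Ioc]
  exact integrableOn_const (by rw [Real.volume_Ioc]; exact ENNReal.ofReal_ne_top)

lemma wt_eq_integral (N : ℕ) (q : Fin N → ℝ) (p : ℝ) (hp0 : 0 ≤ p) (hp : p ≤ 1 / 2)
    (i j : Fin N) :
    wt N q p i j = ∫ t : ℝ, (Set.Ioc (p * q i) ((1 - p) * q i)).indicator 1 t *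
      (Set.Ioc (p * q j) ((1 - p) * q j)).indicator 1 t := by
  have hp1 : 0 ≤ 1 - p := by linarith
  simp only [indicator_mul_indicator, Set.Ioc_inter_Ioc]
  rw [integral_indicator_one measurableSet_Ioc, Real.volume_real_Ioc]
  have h1 : (1 - p) * q i ⊓ ((1 - p) * q j) = (1 - p) * min (q i) (q j) := by
    rcases le_total (q i) (q j) with h | h
    · rw [min_eq_left (by nlinarith), min_eq_left h]
    · rw [min_eq_right (by nlinarith), min_eq_right h]
  have h2 : p * q i ⊔ (p * q j) = p * max (q i) (q j) := by
    rcases le_total (q i) (q j) with h | h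
    · rw [max_eq_right (by nlinarith), max_eq_right h]
    · rw [max_eq_left (by nlinarith), max_eq_left h]
  rw [h1, h2, wt, max_comm]

lemma psd (N : ℕ) (q : Fin N → ℝ) (p : ℝ) (hp0 : 0 ≤ p) (hp : p ≤ 1 / 2)
    (c : Fin N → ℝ) : 0 ≤ ∑ i, ∑ j, c i * c j * wt N q p i j := by
  set f : Fin N → ℝ → ℝ :=
    fun i t => c i * (Set.Ioc (p * q i) ((1 - p) * q i)).indicator 1 t with hf
  have hfun : ∀ i j, (fun t => f i t * f j t) =
      fun t => (c i * c j) * ((Set.Ioc (p * q i) ((1 - p) * q i)) ∩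
        Set.Ioc (p * q j) ((1 - p) * q j)).indicator 1 t := by
    intro i j; funext t
    simp only [hf, ← indicator_mul_indicator]; ring
  have hint : ∀ i j, Integrable (fun t => f i t * f j t) := by
    intro i j
    rw [hfun i j]
    simp only [Set.Ioc_inter_Ioc]
    exact (integrable_ind _ _).const_mul _
  have key : ∑ i, ∑ j, c i * c j * wt N q p i j = ∫ t, (∑ i, f i t) ^ 2 := by
    have h2 : ∀ t : ℝ, (∑ i, f i t) ^ 2 = ∑ i, ∑ j, f i t * f j t := by
      intro t; rw [sq, Finset.sum_mul_sum]
    simp_rw [h2]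
    rw [integral_finset_sum _ (fun i _ => integrable_finset_sum _ (fun j _ => hint i j))]
    refine Finset.sum_congr rfl fun i _ => ?_
    rw [integral_finset_sum _ (fun j _ => hint i j)]
    refine Finset.sum_congr rfl fun j _ => ?_
    rw [wt_eq_integral N q p hp0 hp i j, hfun i j, integral_const_mul]
    simp only [indicator_mul_indicator]
  rw [key]
  exact integral_nonneg fun t => sq_nonneg _

theorem stmt_16 (N : ℕ) (hN : 1 ≤ N) (q : Fin N → ℝ)
    (hnn : ∀ i, 0 ≤ q i) (hsum : ∑ i, q i = 1)
    (hsort : ∀ i j : Fin N, i ≤ j → q j ≤ q i)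
    (p : ℝ) (hp0 : 0 ≤ p) (hp : p ≤ 1 / 2) :
    maxcut N q p ≤
      (1 / 4) * ((∑ i : Fin N, ∑ j ∈ Finset.univ.erase i, wt N q p i j) +
        ∑ i : Fin N, (1 - 2 * p) * q i) := by
  have hwsymm : ∀ i j, wt N q p i j = wt N q p j i := fun i j => by
    simp [wt, min_comm, max_comm]
  have hdiag : ∀ i, wt N q p i i = (1 - 2 * p) * q i := by
    intro i
    simp only [wt, min_self, max_self]
    rw [max_eq_right (by nlinarith [hnn i])]
    ring
  have hRHS : (∑ i : Fin N, ∑ j ∈ Finset.univ.erase i, wt N q p i j) +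
      ∑ i : Fin N, (1 - 2 * p) * q i = ∑ i, ∑ j, wt N q p i j := by
    rw [← Finset.sum_add_distrib]
    refine Finset.sum_congr rfl fun i _ => ?_
    rw [← hdiag i]
    exact Finset.sum_erase_add _ _ (Finset.mem_univ i)
  rw [hRHS, maxcut]
  apply Finset.sup'_le
  intro A _
  set c : Fin N → ℝ := fun i => if i ∈ A then 1 else -1 with hc
  have cA : ∀ i ∈ A, c i = 1 := fun i hi => if_pos hi
  have cB : ∀ i ∈ Aᶜ, c i = -1 := fun i hi => if_neg (Finset.mem_compl.1 hi)
  have e1 : ∀ W : Fin N → Fin N → ℝ, ∑ i, ∑ j, W i j =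
      (∑ i ∈ A, ∑ j ∈ A, W i j) + (∑ i ∈ A, ∑ j ∈ Aᶜ, W i j) +
      ((∑ i ∈ Aᶜ, ∑ j ∈ A, W i j) + ∑ i ∈ Aᶜ, ∑ j ∈ Aᶜ, W i j) := by
    intro W
    rw [← Finset.sum_add_sum_compl A (fun i => ∑ j, W i j)]
    have h : ∀ i : Fin N, ∑ j, W i j = ∑ j ∈ A, W i j + ∑ j ∈ Aᶜ, W i j :=
      fun i => (Finset.sum_add_sum_compl A _).symm
    simp_rw [h]
    rw [Finset.sum_add_distrib, Finset.sum_add_distrib]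
  have hQ := e1 (fun i j => c i * c j * wt N q p i j)
  have hS := e1 (fun i j => wt N q p i j)
  have h1 : ∑ i ∈ A, ∑ j ∈ A, c i * c j * wt N q p i j
      = ∑ i ∈ A, ∑ j ∈ A, wt N q p i j :=
    Finset.sum_congr rfl fun i hi => Finset.sum_congr rfl fun j hj => by
      rw [cA i hi, cA j hj]; ring
  have h2 : ∑ i ∈ A, ∑ j ∈ Aᶜ, c i * c j * wt N q p i j
      = -∑ i ∈ A, ∑ j ∈ Aᶜ, wt N q p i j := by
    rw [← Finset.sum_neg_distrib]
    refine Finset.sum_congr rfl fun i hi => ?_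
    rw [← Finset.sum_neg_distrib]
    exact Finset.sum_congr rfl fun j hj => by rw [cA i hi, cB j hj]; ring
  have h3 : ∑ i ∈ Aᶜ, ∑ j ∈ A, c i * c j * wt N q p i j
      = -∑ i ∈ Aᶜ, ∑ j ∈ A, wt N q p i j := by
    rw [← Finset.sum_neg_distrib]
    refine Finset.sum_congr rfl fun i hi => ?_
    rw [← Finset.sum_neg_distrib]
    exact Finset.sum_congr rfl fun j hj => by rw [cB i hi, cA j hj]; ring
  have h4 : ∑ i ∈ Aᶜ, ∑ j ∈ Aᶜ, c i * c j * wt N q p i j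
      = ∑ i ∈ Aᶜ, ∑ j ∈ Aᶜ, wt N q p i j :=
    Finset.sum_congr rfl fun i hi => Finset.sum_congr rfl fun j hj => by
      rw [cB i hi, cB j hj]; ring
  have hBA : ∑ i ∈ Aᶜ, ∑ j ∈ A, wt N q p i j = cut N q p A := by
    rw [Finset.sum_comm]
    exact Finset.sum_congr rfl fun i _ => Finset.sum_congr rfl fun j _ => hwsymm j i
  have hAB : ∑ i ∈ A, ∑ j ∈ Aᶜ, wt N q p i j = cut N q p A := rfl
  have hpsd := psd N q p hp0 hp c
  rw [hQ, h1, h2, h3, h4, hAB, hBA] at hpsd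
  rw [hS, hAB, hBA]
  show cut N q p A ≤ _
  linarith
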